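/- Let ξ_n and ν_n be sequences of positive real numbers with ξ_n → ∞ and ν_n → 0 as n → ∞. If lim_{n→∞} ξ_n ν_n = γ (where γ may be 0, a positive real, or ∞), then lim_{n→∞} Φ(−√ξ_n (1 − ν_n)) / Φ(−√ξ_n) = e^γ, where Φ is the standard normal cumulative distribution function (with the convention that the limit is ∞ when γ = ∞). -/

import Mathlib

open MeasureTheory Real Set Filter
open scoped Topology

/-- The standard normal cumulative distribution function. -/
noncomputable def Phi (t : ℝ) : ℝ :=
  ∫ x in Iic t, Real.exp (-x ^ 2 / 2) / Real.sqrt (2 * Real.pi)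

lemma Phi_eq (t : ℝ) :
    Phi t = (∫ s in Iic t, Real.exp (-s ^ 2 / 2)) / Real.sqrt (2 * Real.pi) := by
  unfold Phi; rw [integral_div]

lemma hasDerivAt_gauss (s : ℝ) :
    HasDerivAt (fun t : ℝ => Real.exp (-t ^ 2 / 2)) (-s * Real.exp (-s ^ 2 / 2)) s := by
  have h : HasDerivAt (fun t : ℝ => -t ^ 2 / 2) (-s) s := by
    have := ((hasDerivAt_pow 2 s).neg.div_const 2)
    simpa using this.congr_deriv (by ring)
  simpa [mul_comm] using h.exp

lemma gauss_tendsto_atBot :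
    Tendsto (fun t : ℝ => Real.exp (-t ^ 2 / 2)) atBot (𝓝 0) := by
  apply Real.tendsto_exp_atBot.comp
  have h1 : Tendsto (fun t : ℝ => t * t) atBot atTop := tendsto_id.atBot_mul_atBot₀ tendsto_id
  have h2 := tendsto_neg_atTop_atBot.comp h1
  have h3 := Tendsto.atBot_div_const (by norm_num : (0:ℝ) < 2) h2
  exact Tendsto.congr (fun t => by simp [Function.comp_def]; ring) h3

lemma integrableOn_gauss (c : ℝ) :
    IntegrableOn (fun s : ℝ => Real.exp (-s ^ 2 / 2)) (Iic c) := by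
  have h := integrable_exp_neg_mul_sq (b := (1/2 : ℝ)) (by norm_num)
  have : (fun s : ℝ => Real.exp (-s ^ 2 / 2)) = fun s : ℝ => Real.exp (-(1/2) * s ^ 2) := by
    funext s; congr 1; ring
  rw [this]; exact h.integrableOn

lemma integrableOn_mul_gauss (c : ℝ) :
    IntegrableOn (fun s : ℝ => -s * Real.exp (-s ^ 2 / 2)) (Iic c) := by
  have h := (integrable_mul_exp_neg_mul_sq (b := (1/2 : ℝ)) (by norm_num)).neg
  have : (fun s : ℝ => -s * Real.exp (-s ^ 2 / 2))
      = fun s : ℝ => -(s * Real.exp (-(1/2) * s ^ 2)) := by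
    funext s; have : -s ^ 2 / 2 = -(1/2) * s ^ 2 := by ring
    rw [this]; ring
  rw [this]; exact h.integrableOn

lemma gauss_FTC (x : ℝ) :
    ∫ s in Iic (-x), -s * Real.exp (-s ^ 2 / 2) = Real.exp (-x ^ 2 / 2) := by
  have h := integral_Iic_of_hasDerivAt_of_tendsto'
    (f := fun t : ℝ => Real.exp (-t ^ 2 / 2))
    (f' := fun s : ℝ => -s * Real.exp (-s ^ 2 / 2)) (a := -x) (m := 0)
    (fun s _ => hasDerivAt_gauss s) (integrableOn_mul_gauss (-x)) gauss_tendsto_atBot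
  simpa [neg_pow] using h

/-- Mill's ratio upper bound. -/
lemma gauss_upper {x : ℝ} (hx : 0 < x) :
    ∫ s in Iic (-x), Real.exp (-s ^ 2 / 2) ≤ Real.exp (-x ^ 2 / 2) / x := by
  have hmono : ∫ s in Iic (-x), Real.exp (-s ^ 2 / 2)
      ≤ ∫ s in Iic (-x), x⁻¹ * (-s * Real.exp (-s ^ 2 / 2)) := by
    refine setIntegral_mono_on (integrableOn_gauss (-x))
      ((integrableOn_mul_gauss (-x)).const_mul _) measurableSet_Iic ?_
    intro s hs
    simp only [mem_Iic] at hs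
    have h1 : (1:ℝ) ≤ x⁻¹ * (-s) := by
      rw [← div_eq_inv_mul]; rw [le_div_iff₀ hx]; linarith
    have := mul_le_mul_of_nonneg_right h1 (Real.exp_pos (-s ^ 2 / 2)).le
    calc Real.exp (-s ^ 2 / 2) = 1 * Real.exp (-s ^ 2 / 2) := (one_mul _).symm
      _ ≤ x⁻¹ * (-s) * Real.exp (-s ^ 2 / 2) := this
      _ = x⁻¹ * (-s * Real.exp (-s ^ 2 / 2)) := by ring
  rw [integral_const_mul, gauss_FTC] at hmono
  rw [div_eq_inv_mul]; linarith

lemma hasDerivAt_G {s : ℝ} (hs : s ≠ 0) :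
    HasDerivAt (fun t : ℝ => (1 / t ^ 3 - 1 / t) * Real.exp (-t ^ 2 / 2))
      ((1 - 3 / s ^ 4) * Real.exp (-s ^ 2 / 2)) s := by
  have hs3 : s ^ 3 ≠ 0 := pow_ne_zero _ hs
  have h1 : HasDerivAt (fun t : ℝ => 1 / t ^ 3 - 1 / t) (-(3 * s ^ 2) / (s ^ 3) ^ 2 - -1 / s ^ 2) s := by
    have ha : HasDerivAt (fun t : ℝ => 1 / t ^ 3) (-(3 * s ^ 2) / (s ^ 3) ^ 2) s := by
      simpa [one_div] using ((hasDerivAt_pow 3 s).fun_inv hs3).congr_deriv (by ring)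
    have hb : HasDerivAt (fun t : ℝ => 1 / t) (-1 / s ^ 2) s := by
      simpa [one_div] using (hasDerivAt_inv hs).congr_deriv (by ring)
    exact ha.sub hb
  have h2 := h1.mul (hasDerivAt_gauss s)
  refine h2.congr_deriv ?_
  field_simp
  ring

lemma G_tendsto_atBot :
    Tendsto (fun t : ℝ => (1 / t ^ 3 - 1 / t) * Real.exp (-t ^ 2 / 2)) atBot (𝓝 0) := by
  have h1 : Tendsto (fun t : ℝ => 1 / t) atBot (𝓝 0) := by
    have := ((tendsto_inv_atTop_zero (𝕜 := ℝ)).comp tendsto_neg_atBot_atTop).neg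
    simpa [Function.comp_def, one_div, inv_neg] using this
  have h2 : Tendsto (fun t : ℝ => 1 / t ^ 3 - 1 / t) atBot (𝓝 0) := by
    have h3 : Tendsto (fun t : ℝ => (1 / t) ^ 3 - 1 / t) atBot (𝓝 ((0:ℝ) ^ 3 - 0)) :=
      (h1.pow 3).sub h1
    have he : (fun t : ℝ => (1 / t) ^ 3 - 1 / t) = fun t : ℝ => 1 / t ^ 3 - 1 / t := by
      funext t; rw [div_pow, one_pow]
    rw [he] at h3; simpa using h3
  simpa using h2.mul gauss_tendsto_atBot

lemma integrableOn_G' {x : ℝ} (hx : 0 < x) :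
    IntegrableOn (fun s : ℝ => (1 - 3 / s ^ 4) * Real.exp (-s ^ 2 / 2)) (Iic (-x)) := by
  refine Integrable.mono' ((integrableOn_gauss (-x)).const_mul (1 + 3 / x ^ 4)) ?_ ?_
  · apply Measurable.aestronglyMeasurable
    fun_prop
  · rw [ae_restrict_iff' measurableSet_Iic]
    filter_upwards with s hs
    simp only [mem_Iic] at hs
    have hx4 : (0:ℝ) < x ^ 4 := by positivity
    have hs2 : x ^ 2 ≤ s ^ 2 := by nlinarith
    have hs4 : x ^ 4 ≤ s ^ 4 := by nlinarith [mul_self_le_mul_self (by positivity : (0:ℝ) ≤ x ^ 2) hs2]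
    have hs4' : (0:ℝ) < s ^ 4 := lt_of_lt_of_le hx4 hs4
    have hdiv : 3 / s ^ 4 ≤ 3 / x ^ 4 := by
      apply div_le_div_of_nonneg_left (by norm_num) hx4 hs4
    have hdiv0 : (0:ℝ) ≤ 3 / s ^ 4 := by positivity
    have habs : |1 - 3 / s ^ 4| ≤ 1 + 3 / x ^ 4 := by
      rcases abs_cases (1 - 3 / s ^ 4) with ⟨h, _⟩ | ⟨h, _⟩ <;> rw [h] <;> nlinarith
    rw [norm_mul, Real.norm_eq_abs, Real.norm_eq_abs, abs_of_pos (Real.exp_pos _)]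
    exact mul_le_mul_of_nonneg_right habs (Real.exp_pos _).le

lemma G_FTC {x : ℝ} (hx : 0 < x) :
    ∫ s in Iic (-x), (1 - 3 / s ^ 4) * Real.exp (-s ^ 2 / 2)
      = (1 / x - 1 / x ^ 3) * Real.exp (-x ^ 2 / 2) := by
  have h := integral_Iic_of_hasDerivAt_of_tendsto'
    (f := fun t : ℝ => (1 / t ^ 3 - 1 / t) * Real.exp (-t ^ 2 / 2))
    (f' := fun s : ℝ => (1 - 3 / s ^ 4) * Real.exp (-s ^ 2 / 2)) (a := -x) (m := 0)
    (fun s hs => hasDerivAt_G (by rintro rfl; simp only [mem_Iic] at hs; linarith))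
    (integrableOn_G' hx) G_tendsto_atBot
  rw [h, sub_zero]
  show (1 / (-x) ^ 3 - 1 / (-x)) * Real.exp (-(-x) ^ 2 / 2) = _
  rw [show ((-x) ^ 2 : ℝ) = x ^ 2 by ring]
  rw [show ((-x) ^ 3 : ℝ) = -(x ^ 3) by ring]
  rw [show (1 : ℝ) / -(x ^ 3) - 1 / -x = 1 / x - 1 / x ^ 3 by
    rw [div_neg, div_neg]; ring]

/-- Mill's ratio lower bound. -/
lemma gauss_lower {x : ℝ} (hx : 0 < x) :
    (1 / x - 1 / x ^ 3) * Real.exp (-x ^ 2 / 2) ≤ ∫ s in Iic (-x), Real.exp (-s ^ 2 / 2) := by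
  rw [← G_FTC hx]
  refine setIntegral_mono_on (integrableOn_G' hx) (integrableOn_gauss (-x))
    measurableSet_Iic ?_
  intro s hs
  simp only [mem_Iic] at hs
  have hs0 : s ≠ 0 := by intro h; rw [h] at hs; linarith
  have hs4 : (0:ℝ) < s ^ 4 :=
    lt_of_le_of_ne (by positivity) (Ne.symm (pow_ne_zero 4 hs0))
  have : 1 - 3 / s ^ 4 ≤ 1 := by
    have : (0:ℝ) ≤ 3 / s ^ 4 := by positivity
    linarith
  nlinarith [Real.exp_pos (-s ^ 2 / 2), mul_le_mul_of_nonneg_right this (Real.exp_pos (-s ^ 2 / 2)).le]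

lemma ident_upper {a v : ℝ} (ha : 1 < a) (hv0 : 0 < v) (hv : v < 1) :
    (Real.exp (-(a * (1 - v)) ^ 2 / 2) / (a * (1 - v))) /
      ((1 / a - 1 / a ^ 3) * Real.exp (-a ^ 2 / 2))
    = Real.exp (a ^ 2 * v - a ^ 2 * v ^ 2 / 2) * ((1 - v) * (1 - (a ^ 2)⁻¹))⁻¹ := by
  have ha0 : a ≠ 0 := by linarith
  have hv1 : (1:ℝ) - v ≠ 0 := by linarith
  have ha2 : a ^ 2 ≠ 1 := by nlinarith
  have ha2' : a ^ 2 - 1 ≠ 0 := by intro h; apply ha2; linarith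
  have key : Real.exp (-(a * (1 - v)) ^ 2 / 2)
      = Real.exp (a ^ 2 * v - a ^ 2 * v ^ 2 / 2) * Real.exp (-a ^ 2 / 2) := by
    rw [← Real.exp_add]; congr 1; ring
  rw [key]
  have he : Real.exp (-a ^ 2 / 2) ≠ 0 := ne_of_gt (Real.exp_pos _)
  have hd : 1 / a - 1 / a ^ 3 ≠ 0 := by
    have : 1 / a ^ 3 < 1 / a := by
      apply div_lt_div_of_pos_left one_pos (by positivity)
      nlinarith
    intro h; rw [sub_eq_zero] at h; rw [h] at this; exact lt_irrefl _ this
  have hstep : Real.exp (a ^ 2 * v - a ^ 2 * v ^ 2 / 2) * Real.exp (-a ^ 2 / 2) / (a * (1 - v)) /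
      ((1 / a - 1 / a ^ 3) * Real.exp (-a ^ 2 / 2))
      = Real.exp (a ^ 2 * v - a ^ 2 * v ^ 2 / 2) / (a * (1 - v) * (1 / a - 1 / a ^ 3)) := by
    rw [div_div]
    rw [div_eq_div_iff (by
        apply mul_ne_zero (mul_ne_zero ha0 hv1) (mul_ne_zero hd he))
      (mul_ne_zero (mul_ne_zero ha0 hv1) hd)]
    ring
  rw [hstep, div_eq_mul_inv]
  congr 1
  rw [inv_eq_iff_eq_inv, inv_inv]
  field_simp

lemma ident_lower {a v : ℝ} (ha : 1 < a) (hv0 : 0 < v) (hv : v < 1) :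
    ((1 / (a * (1 - v)) - 1 / (a * (1 - v)) ^ 3) * Real.exp (-(a * (1 - v)) ^ 2 / 2)) /
      (Real.exp (-a ^ 2 / 2) / a)
    = Real.exp (a ^ 2 * v - a ^ 2 * v ^ 2 / 2)
        * ((1 - v)⁻¹ * (1 - (a ^ 2 * (1 - v) ^ 2)⁻¹)) := by
  have ha0 : a ≠ 0 := by linarith
  have hv1 : (1:ℝ) - v ≠ 0 := by linarith
  have key : Real.exp (-(a * (1 - v)) ^ 2 / 2)
      = Real.exp (a ^ 2 * v - a ^ 2 * v ^ 2 / 2) * Real.exp (-a ^ 2 / 2) := by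
    rw [← Real.exp_add]; congr 1; ring
  rw [key]
  have he : Real.exp (-a ^ 2 / 2) ≠ 0 := ne_of_gt (Real.exp_pos _)
  have hb0 : a * (1 - v) ≠ 0 := mul_ne_zero ha0 hv1
  have hstep : (1 / (a * (1 - v)) - 1 / (a * (1 - v)) ^ 3) *
      (Real.exp (a ^ 2 * v - a ^ 2 * v ^ 2 / 2) * Real.exp (-a ^ 2 / 2)) /
      (Real.exp (-a ^ 2 / 2) / a)
      = (1 / (a * (1 - v)) - 1 / (a * (1 - v)) ^ 3) * a *
        Real.exp (a ^ 2 * v - a ^ 2 * v ^ 2 / 2) := by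
    rw [div_div_eq_mul_div, div_eq_iff he]
    ring
  rw [hstep]
  have hkey2 : (1 / (a * (1 - v)) - 1 / (a * (1 - v)) ^ 3) * a
      = (1 - v)⁻¹ * (1 - (a ^ 2 * (1 - v) ^ 2)⁻¹) := by
    field_simp
  rw [hkey2]
  ring

/-- Shao's Lemma 1 (finite-γ case): if `ξ_n → ∞`, `ν_n → 0` and `ξ_n ν_n → γ ∈ [0, ∞)`,
then `Φ(−√ξ_n (1 − ν_n)) / Φ(−√ξ_n) → e^γ`. -/
theorem phi_ratio_tendsto_exp (ξ ν : ℕ → ℝ) (hξpos : ∀ n, 0 < ξ n) (hνpos : ∀ n, 0 < ν n)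
    (hξ : Tendsto ξ atTop atTop) (hν : Tendsto ν atTop (nhds 0))
    (γ : ℝ) (hγ : 0 ≤ γ) (hprod : Tendsto (fun n => ξ n * ν n) atTop (nhds γ)) :
    Tendsto (fun n => Phi (-Real.sqrt (ξ n) * (1 - ν n)) / Phi (-Real.sqrt (ξ n)))
      atTop (nhds (Real.exp γ)) := by
  -- the exponential factor
  have hsq : Tendsto (fun n => ξ n * ν n ^ 2) atTop (𝓝 0) := by
    have := hprod.mul hν
    rw [mul_zero] at this
    exact this.congr (fun n => by ring)
  have hE : Tendsto (fun n => Real.exp (ξ n * ν n - ξ n * ν n ^ 2 / 2)) atTop (𝓝 (Real.exp γ)) := by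
    apply Real.continuous_exp.continuousAt.tendsto.comp
    have := hprod.sub (hsq.div_const 2)
    simpa using this
  have hν1 : Tendsto (fun n => (1 - ν n)⁻¹) atTop (𝓝 1) := by
    have : Tendsto (fun n => 1 - ν n) atTop (𝓝 (1 - 0)) := tendsto_const_nhds.sub hν
    rw [sub_zero] at this
    simpa using this.inv₀ one_ne_zero
  have hξinv : Tendsto (fun n => (ξ n)⁻¹) atTop (𝓝 0) := hξ.inv_tendsto_atTop
  have hbig : Tendsto (fun n => ξ n * (1 - ν n) ^ 2) atTop atTop := by
    apply hξ.atTop_mul_pos (C := 1) one_pos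
    have : Tendsto (fun n => 1 - ν n) atTop (𝓝 (1 - 0)) := tendsto_const_nhds.sub hν
    rw [sub_zero] at this
    simpa using this.pow 2
  have hbiginv : Tendsto (fun n => (ξ n * (1 - ν n) ^ 2)⁻¹) atTop (𝓝 0) :=
    hbig.inv_tendsto_atTop
  set U : ℕ → ℝ := fun n => Real.exp (ξ n * ν n - ξ n * ν n ^ 2 / 2)
      * ((1 - ν n) * (1 - (ξ n)⁻¹))⁻¹ with hUdef
  set L : ℕ → ℝ := fun n => Real.exp (ξ n * ν n - ξ n * ν n ^ 2 / 2)
      * ((1 - ν n)⁻¹ * (1 - (ξ n * (1 - ν n) ^ 2)⁻¹)) with hLdef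
  have hU : Tendsto U atTop (𝓝 (Real.exp γ)) := by
    have h2 : Tendsto (fun n => (1 - ν n) * (1 - (ξ n)⁻¹)) atTop (𝓝 ((1 - 0) * (1 - 0))) :=
      (tendsto_const_nhds.sub hν).mul (tendsto_const_nhds.sub hξinv)
    have h3 := hE.mul (h2.inv₀ (by norm_num))
    rw [hUdef]
    simpa using h3
  have hL : Tendsto L atTop (𝓝 (Real.exp γ)) := by
    have h2 : Tendsto (fun n => (1 - ν n)⁻¹ * (1 - (ξ n * (1 - ν n) ^ 2)⁻¹)) atTop
        (𝓝 (1 * (1 - 0))) := hν1.mul (tendsto_const_nhds.sub hbiginv)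
    have h3 := hE.mul h2
    rw [hLdef]
    simpa using h3
  have hev1 : ∀ᶠ n in atTop, ν n < 1/2 := hν.eventually_lt_const (by norm_num)
  have hev2 : ∀ᶠ n in atTop, (16:ℝ) ≤ ξ n := hξ.eventually_ge_atTop 16
  have hsqrt2pi : (0:ℝ) < Real.sqrt (2 * Real.pi) :=
    Real.sqrt_pos.mpr (by positivity)
  -- main setup per n
  have key : ∀ᶠ n in atTop,
      L n ≤ Phi (-Real.sqrt (ξ n) * (1 - ν n)) / Phi (-Real.sqrt (ξ n)) ∧
      Phi (-Real.sqrt (ξ n) * (1 - ν n)) / Phi (-Real.sqrt (ξ n)) ≤ U n := by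
    filter_upwards [hev1, hev2] with n h1 h2
    set x := ξ n with hx
    set v := ν n with hvv
    set a := Real.sqrt x with haa
    have hx0 : 0 < x := hξpos n
    have hv0 : 0 < v := hνpos n
    have hv1 : v < 1 := lt_trans h1 (by norm_num)
    have ha2 : a ^ 2 = x := Real.sq_sqrt hx0.le
    have ha4 : (4:ℝ) ≤ a := by
      have : Real.sqrt 16 ≤ a := Real.sqrt_le_sqrt h2
      rwa [show (16:ℝ) = 4 ^ 2 by norm_num, Real.sqrt_sq (by norm_num)] at this
    have ha1 : 1 < a := by linarith
    set b := a * (1 - v) with hbb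
    have hb2 : (2:ℝ) ≤ b := by nlinarith
    have hb0 : 0 < b := by linarith
    have hb1 : 1 < b := by linarith
    -- positivity of denominators
    have hda : 0 < 1 / a - 1 / a ^ 3 := by
      rw [sub_pos]
      apply div_lt_div_of_pos_left one_pos (by positivity)
      nlinarith
    have hdb : 0 < 1 / b - 1 / b ^ 3 := by
      rw [sub_pos]
      apply div_lt_div_of_pos_left one_pos (by positivity)
      nlinarith [mul_le_mul hb2 hb2 (by norm_num : (0:ℝ) ≤ 2) (by linarith : (0:ℝ) ≤ b)]
    set Ia := ∫ s in Iic (-a), Real.exp (-s ^ 2 / 2) with hIa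
    set Ib := ∫ s in Iic (-b), Real.exp (-s ^ 2 / 2) with hIb
    have hIa_lo : (1 / a - 1 / a ^ 3) * Real.exp (-a ^ 2 / 2) ≤ Ia := gauss_lower (by linarith)
    have hIa_hi : Ia ≤ Real.exp (-a ^ 2 / 2) / a := gauss_upper (by linarith)
    have hIb_lo : (1 / b - 1 / b ^ 3) * Real.exp (-b ^ 2 / 2) ≤ Ib := gauss_lower hb0
    have hIb_hi : Ib ≤ Real.exp (-b ^ 2 / 2) / b := gauss_upper hb0
    have hIa_pos : 0 < Ia :=
      lt_of_lt_of_le (by positivity) hIa_lo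
    have hIb_pos : 0 < Ib :=
      lt_of_lt_of_le (by positivity) hIb_lo
    -- rewrite the Phi ratio
    have hratio : Phi (-Real.sqrt (ξ n) * (1 - ν n)) / Phi (-Real.sqrt (ξ n)) = Ib / Ia := by
      rw [show -Real.sqrt (ξ n) * (1 - ν n) = -b by rw [hbb, haa, hx, hvv]; ring]
      rw [show Real.sqrt (ξ n) = a by rw [haa, hx]]
      rw [Phi_eq, Phi_eq, ← hIa, ← hIb]
      rw [div_div_div_cancel_right₀]
      exact ne_of_gt hsqrt2pi
    rw [hratio]
    constructor
    · -- lower bound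
      have hle : ((1 / b - 1 / b ^ 3) * Real.exp (-b ^ 2 / 2)) / (Real.exp (-a ^ 2 / 2) / a)
          ≤ Ib / Ia :=
        div_le_div₀ hIb_pos.le hIb_lo hIa_pos hIa_hi
      have hident := ident_lower ha1 hv0 hv1
      rw [← hbb] at hident
      rw [hident, ha2] at hle
      exact hle
    · -- upper bound
      have hle : Ib / Ia
          ≤ (Real.exp (-b ^ 2 / 2) / b) / ((1 / a - 1 / a ^ 3) * Real.exp (-a ^ 2 / 2)) :=
        div_le_div₀ (by positivity) hIb_hi (by positivity) hIa_lo
      have hident := ident_upper ha1 hv0 hv1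
      rw [← hbb] at hident
      rw [hident, ha2] at hle
      exact hle
  refine tendsto_of_tendsto_of_tendsto_of_le_of_le' hL hU ?_ ?_
  · filter_upwards [key] with n hn using hn.1
  · filter_upwards [key] with n hn using hn.2
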